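/- For any simple graph G and any independent set T of G, |T| ≤ |N_G(T)| + |V(G)| − 2·mat(G). -/
import Mathlib


open Finset

namespace TB

variable {V W : Type*}

/-- A matching of `G` given as a finite set of edges: each element is an edge of `G`
and no two distinct edges share a vertex. -/
def IsMatching (G : SimpleGraph V) (M : Finset (Sym2 V)) : Prop :=
  (∀ e ∈ M, e ∈ G.edgeSet) ∧
    ∀ e ∈ M, ∀ f ∈ M, e ≠ f → ∀ v : V, v ∈ e → v ∉ f

/-- A perfect matching: a matching covering every vertex. -/
def IsPerfectMatching (G : SimpleGraph V) (M : Finset (Sym2 V)) : Prop :=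
  IsMatching G M ∧ ∀ v : V, ∃ e ∈ M, v ∈ e

/-- The matching number `mat(G)`: the maximum size of a matching of `G`. -/
noncomputable def matchingNumber (G : SimpleGraph V) [Fintype V] : ℕ := by
  classical
  exact Finset.univ.powerset.sup fun M => if IsMatching G M then M.card else 0

/-- `T` is an independent set of `G`. -/
def IsIndepSet (G : SimpleGraph V) (T : Finset V) : Prop :=
  ∀ u ∈ T, ∀ v ∈ T, ¬ G.Adj u v

/-- The neighborhood `N_G(T)` of a set of vertices `T`. -/
noncomputable def nbrSet (G : SimpleGraph V) [Fintype V] (T : Finset V) : Finset V := by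
  classical
  exact Finset.univ.filter fun v => ∃ t ∈ T, G.Adj t v

/-- `G` is a Tutte-Berge graph: some independent set `T` satisfies
`|T| = |N_G(T)| + |V(G)| - 2 mat(G)` (written additively to avoid truncated subtraction). -/
noncomputable def TutteBerge (G : SimpleGraph V) [Fintype V] : Prop :=
  ∃ T : Finset V, IsIndepSet G T ∧
    T.card + 2 * matchingNumber G = (nbrSet G T).card + Fintype.card V

/-- `G` is factor-critical: deleting any vertex leaves a graph with a perfect matching. -/
def FactorCritical (G : SimpleGraph V) : Prop :=
  ∀ v : V, ∃ M, IsPerfectMatching (G.induce {x | x ≠ v}) M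

/-- The Gallai-Edmonds set `D(G)`: vertices missed by at least one maximum matching. -/
noncomputable def gallaiD (G : SimpleGraph V) [Fintype V] : Finset V := by
  classical
  exact Finset.univ.filter fun v =>
    ∃ M, IsMatching G M ∧ M.card = matchingNumber G ∧ ∀ e ∈ M, v ∉ e

/-- The cone `G*` over `G`: a new apex vertex (`none`) joined to every vertex of `G`. -/
def cone (G : SimpleGraph V) : SimpleGraph (Option V) :=
  SimpleGraph.fromRel fun a b =>
    a = none ∨ ∃ u v, a = some u ∧ b = some v ∧ G.Adj u v

/-- The edge polytope `P_H`: convex hull of the points `e_u + e_v` over edges `{u,v}` of `H`. -/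
noncomputable def edgePolytope (H : SimpleGraph W) : Set (W → ℝ) := by
  classical
  exact convexHull ℝ
    {x | ∃ u v, H.Adj u v ∧
      x = fun w => (if w = u then (1 : ℝ) else 0) + (if w = v then (1 : ℝ) else 0)}

/-- Every connected component of `H` contains an odd cycle. -/
def HasOddCycleComponents (H : SimpleGraph W) : Prop :=
  ∀ c : H.ConnectedComponent, ∃ u, u ∈ c.supp ∧ ∃ p : H.Walk u u, p.IsCycle ∧ Odd p.length

/-- The neighborhood of a set of vertices, as a set. -/
def nbrSetSet (H : SimpleGraph W) (T : Set W) : Set W := {w | ∃ t ∈ T, H.Adj t w}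

/-- The bipartite graph `B_H(T)` induced by `T`: vertex set `T ∪ N_H(T)`,
with the edges of `H` joining a vertex of `T` to a vertex of `N_H(T)`. -/
def inducedBipartite (H : SimpleGraph W) (T : Set W) :
    SimpleGraph ↥(T ∪ nbrSetSet H T) :=
  SimpleGraph.fromRel fun a b => (a : W) ∈ T ∧ H.Adj a b

/-- An independent set `T` is fundamental in `H` if `B_H(T)` is connected (trivially so
if empty) and, when `T ∪ N_H(T) ≠ V(H)`, each connected component of
`H \ (T ∪ N_H(T))` contains an odd cycle. -/
def Fundamental (H : SimpleGraph W) (T : Set W) : Prop :=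
  (∀ u ∈ T, ∀ v ∈ T, ¬ H.Adj u v) ∧
  (inducedBipartite H T).Preconnected ∧
  (T ∪ nbrSetSet H T ≠ Set.univ →
    HasOddCycleComponents (H.induce (T ∪ nbrSetSet H T)ᶜ))


private lemma edge_aux {V : Type*} [Fintype V] (G : SimpleGraph V) (T : Finset V)
    (hT : IsIndepSet G T) {e : Sym2 V} (he : e ∈ G.edgeSet)
    (ht : ∃ t ∈ T, t ∈ e) : ∃ v, v ∈ e ∧ v ∉ T ∧ v ∈ nbrSet G T := by
  classical
  induction e using Sym2.ind with
  | _ u w =>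
    rw [SimpleGraph.mem_edgeSet] at he
    obtain ⟨t, htT, hte⟩ := ht
    rw [Sym2.mem_iff] at hte
    rcases hte with rfl | rfl
    · refine ⟨w, by simp [Sym2.mem_iff], fun hw => hT t htT w hw he, ?_⟩
      simp only [nbrSet, Finset.mem_filter, Finset.mem_univ, true_and]
      exact ⟨t, htT, he⟩
    · refine ⟨u, by simp [Sym2.mem_iff], fun hu => hT t htT u hu he.symm, ?_⟩
      simp only [nbrSet, Finset.mem_filter, Finset.mem_univ, true_and]
      exact ⟨t, htT, he.symm⟩

/-- for any simple graph `G` and independent set `T`,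
`|T| ≤ |N_G(T)| + |V(G)| - 2 mat(G)` (written additively). -/
theorem indep_card_le_tutte_berge_bound {V : Type*} [Fintype V] (G : SimpleGraph V)
    (T : Finset V) (hT : IsIndepSet G T) :
    T.card + 2 * matchingNumber G ≤ (nbrSet G T).card + Fintype.card V := by
  classical
  -- obtain a maximum matching
  obtain ⟨M, hM, hMcard⟩ : ∃ M : Finset (Sym2 V), IsMatching G M ∧
      M.card = matchingNumber G := by
    obtain ⟨M, -, hMeq⟩ := Finset.exists_mem_eq_sup (Finset.univ.powerset (α := Sym2 V))
      ⟨∅, Finset.empty_mem_powerset _⟩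
      (fun M => if IsMatching G M then M.card else 0)
    by_cases h : IsMatching G M
    · exact ⟨M, h, by simp only [matchingNumber, hMeq, if_pos h]⟩
    · refine ⟨∅, ⟨by simp, by simp⟩, ?_⟩
      simp only [matchingNumber, hMeq, if_neg h, Finset.card_empty]
  -- vertex set of an edge
  set ev : Sym2 V → Finset V := fun e => Finset.univ.filter (· ∈ e) with hev
  have hmemev : ∀ (e : Sym2 V) (v : V), v ∈ ev e ↔ v ∈ e := by
    intro e v; simp [hev]
  -- edges of M meeting T, and the rest
  set A : Finset (Sym2 V) := M.filter (fun e => ∃ t ∈ T, t ∈ e) with hA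
  set B : Finset (Sym2 V) := M.filter (fun e => ¬ ∃ t ∈ T, t ∈ e) with hB
  have hAB : A.card + B.card = M.card := Finset.card_filter_add_card_filter_not _
  -- each edge of M has exactly two endpoints
  have hcard2 : ∀ e ∈ M, (ev e).card = 2 := by
    intro e heM
    have hne := G.not_isDiag_of_mem_edgeSet (hM.1 e heM)
    induction e using Sym2.ind with
    | _ u w =>
      have huw : u ≠ w := by simpa [Sym2.mk_isDiag_iff] using hne
      have : ev s(u, w) = {u, w} := by
        ext v; simp [hmemev, Sym2.mem_iff, Finset.mem_insert]
      rw [this, Finset.card_insert_of_notMem (by simpa using huw), Finset.card_singleton]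
  -- disjointness of sdiffs coming from the matching condition
  have hdisjev : ∀ e ∈ M, ∀ f ∈ M, e ≠ f → Disjoint (ev e \ T) (ev f \ T) := by
    intro e heM f hfM hef
    rw [Finset.disjoint_left]
    intro v hv hv'
    have h1 : v ∈ e := (hmemev e v).1 (Finset.mem_sdiff.1 hv).1
    have h2 : v ∈ f := (hmemev f v).1 (Finset.mem_sdiff.1 hv').1
    exact hM.2 e heM f hfM hef v h1 h2
  -- counting vertices outside T
  have hbi : (M.biUnion fun e => ev e \ T).card = ∑ e ∈ M, (ev e \ T).card :=
    Finset.card_biUnion hdisjev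
  have hsumB : ∑ e ∈ B, (ev e \ T).card = 2 * B.card := by
    rw [Finset.sum_congr rfl (fun e heB => ?_), Finset.sum_const, smul_eq_mul, mul_comm]
    rw [hB, Finset.mem_filter] at heB
    have : ev e \ T = ev e := by
      apply Finset.sdiff_eq_self_of_disjoint
      rw [Finset.disjoint_left]
      intro v hv hvT
      exact heB.2 ⟨v, hvT, (hmemev e v).1 hv⟩
    rw [this, hcard2 e heB.1]
  have hsumA : A.card ≤ ∑ e ∈ A, (ev e \ T).card := by
    have := Finset.card_nsmul_le_sum A (fun e => (ev e \ T).card) 1 ?_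
    · simpa using this
    · intro e heA
      rw [hA, Finset.mem_filter] at heA
      obtain ⟨v, hv1, hv2, -⟩ := edge_aux G T hT (hM.1 e heA.1) heA.2
      exact Finset.card_pos.2 ⟨v, Finset.mem_sdiff.2 ⟨(hmemev e v).2 hv1, hv2⟩⟩
  have hsum : A.card + 2 * B.card ≤ ∑ e ∈ M, (ev e \ T).card := by
    calc A.card + 2 * B.card ≤ (∑ e ∈ A, (ev e \ T).card) + ∑ e ∈ B, (ev e \ T).card := by
          rw [hsumB]; exact Nat.add_le_add_right hsumA _
      _ = ∑ e ∈ M, (ev e \ T).card := Finset.sum_filter_add_sum_filter_not _ _ _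
  have hTdisj : Disjoint T (M.biUnion fun e => ev e \ T) := by
    rw [Finset.disjoint_right]
    intro v hv
    obtain ⟨e, -, hve⟩ := Finset.mem_biUnion.1 hv
    exact (Finset.mem_sdiff.1 hve).2
  have hmain : T.card + (A.card + 2 * B.card) ≤ Fintype.card V := by
    calc T.card + (A.card + 2 * B.card)
        ≤ T.card + (M.biUnion fun e => ev e \ T).card := by
          rw [hbi]; exact Nat.add_le_add_left hsum _
      _ = (T ∪ M.biUnion fun e => ev e \ T).card := (Finset.card_union_of_disjoint hTdisj).symm
      _ ≤ Fintype.card V := by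
          rw [← Finset.card_univ]; exact Finset.card_le_card (Finset.subset_univ _)
  -- |A| ≤ |N(T)|
  have hAle : A.card ≤ (nbrSet G T).card := by
    rcases Finset.eq_empty_or_nonempty A with hAe | hAne
    · simp [hAe]
    obtain ⟨e₀, he₀⟩ := hAne
    have he₀' := he₀
    rw [hA, Finset.mem_filter] at he₀'
    obtain ⟨v₀, -, -, -⟩ := edge_aux G T hT (hM.1 e₀ he₀'.1) he₀'.2
    haveI : Nonempty V := ⟨v₀⟩
    have hP : ∀ e ∈ A, ∃ v, v ∈ e ∧ v ∉ T ∧ v ∈ nbrSet G T := by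
      intro e heA
      rw [hA, Finset.mem_filter] at heA
      exact edge_aux G T hT (hM.1 e heA.1) heA.2
    set f : Sym2 V → V := fun e =>
      if h : ∃ v, v ∈ e ∧ v ∉ T ∧ v ∈ nbrSet G T then h.choose else Classical.arbitrary V
      with hf
    have hfspec : ∀ e ∈ A, f e ∈ e ∧ f e ∉ T ∧ f e ∈ nbrSet G T := by
      intro e heA
      have h := hP e heA
      rw [hf]; simp only [dif_pos h]
      exact h.choose_spec
    apply Finset.card_le_card_of_injOn f
    · intro e heA; exact (hfspec e heA).2.2
    · intro e heA e' heA' hfe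
      simp only [Finset.mem_coe] at heA heA'
      by_contra hne
      have h1 : f e ∈ e := (hfspec e heA).1
      have h2 : f e' ∈ e' := (hfspec e' heA').1
      have heM : e ∈ M := (Finset.mem_filter.1 (hA ▸ heA)).1
      have heM' : e' ∈ M := (Finset.mem_filter.1 (hA ▸ heA')).1
      exact hM.2 e heM e' heM' hne (f e) h1 (hfe ▸ h2)
  omega

end TB
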